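/- In the metric space X = {x ∈ [−1,1]² : x₁ ≤ 0 or x₂ ≤ 0} ⊆ ℝ² with the induced length (shortest-path) metric, the Fréchet mean of the three points e₁ = (1,0), e₂ = (0,1), and −e₁ = (−1,0) is the point (−α, α) with α = (2−√2)/6; that is, this point uniquely minimizes the sum of squared path-distances to the three points. -/

import Mathlib

open scoped ENNReal
open Set Filter
open scoped Topology

noncomputable def pathDist {E : Type*} [NormedAddCommGroup E] [InnerProductSpace ℝ E]
    (X : Set E) (x y : E) : ℝ≥0∞ :=
  ⨅ (γ : ℝ → E) (_ : ContinuousOn γ (Set.Icc 0 1)) (_ : γ 0 = x) (_ : γ 1 = y)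
    (_ : ∀ t ∈ Set.Icc (0:ℝ) 1, γ t ∈ X), eVariationOn γ (Set.Icc 0 1)

lemma edist_le_pathDist {E : Type*} [NormedAddCommGroup E] [InnerProductSpace ℝ E]
    (X : Set E) (x y : E) : edist x y ≤ pathDist X x y := by
  refine le_iInf fun γ => le_iInf fun _ => le_iInf fun h0 => le_iInf fun h1 => le_iInf fun _ => ?_
  rw [← h0, ← h1]
  exact eVariationOn.edist_le γ ⟨le_rfl, zero_le_one⟩ ⟨zero_le_one, le_rfl⟩

lemma lipschitz_affine {E : Type*} [NormedAddCommGroup E] [NormedSpace ℝ E] (x v : E) :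
    LipschitzWith ‖v‖₊ (fun t : ℝ => x + t • v) := by
  refine LipschitzWith.of_dist_le_mul fun s t => ?_
  rw [dist_eq_norm, dist_eq_norm]
  simp only [add_sub_add_left_eq_sub, ← sub_smul, norm_smul, Real.norm_eq_abs]
  rw [mul_comm, coe_nnnorm]

lemma evar_affine {E : Type*} [NormedAddCommGroup E] [NormedSpace ℝ E] (x v : E) {a b : ℝ}
    (hab : a ≤ b) :
    eVariationOn (fun t : ℝ => x + t • v) (Set.Icc a b) ≤ ‖v‖₊ * ENNReal.ofReal (b - a) := by
  have h1 : eVariationOn (fun t : ℝ => x + t • v) (Set.Icc a b)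
      ≤ ‖v‖₊ * eVariationOn id (Set.Icc a b) :=
    ((lipschitz_affine x v).lipschitzOnWith (s := Set.univ)).comp_eVariationOn_le (Set.mapsTo_univ _ _)
  refine h1.trans (mul_le_mul_right ?_ _)
  have h2 := (monotoneOn_id (s := Set.Icc a b)).eVariationOn_le
    (Set.left_mem_Icc.2 hab) (Set.right_mem_Icc.2 hab)
  simpa using h2

lemma pathDist_le_of_le {E : Type*} [NormedAddCommGroup E] [InnerProductSpace ℝ E]
    (X : Set E) {x y : E} {γ : ℝ → E} (hc : ContinuousOn γ (Set.Icc 0 1)) (h0 : γ 0 = x)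
    (h1 : γ 1 = y) (hm : ∀ t ∈ Set.Icc (0:ℝ) 1, γ t ∈ X) :
    pathDist X x y ≤ eVariationOn γ (Set.Icc 0 1) := by
  exact iInf_le_of_le γ (iInf_le_of_le hc (iInf_le_of_le h0 (iInf_le_of_le h1 (iInf_le _ hm))))

lemma pathDist_le_segment {E : Type*} [NormedAddCommGroup E] [InnerProductSpace ℝ E]
    (X : Set E) {x y : E} (h : ∀ t ∈ Set.Icc (0:ℝ) 1, x + t • (y - x) ∈ X) :
    pathDist X x y ≤ edist x y := by
  refine (pathDist_le_of_le X ((lipschitz_affine x (y - x)).continuous.continuousOn)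
    (by simp) (by simp) h).trans ?_
  refine (evar_affine x (y - x) zero_le_one).trans_eq ?_
  rw [edist_dist, dist_eq_norm, ← enorm_eq_nnnorm, ← ofReal_norm]
  rw [← ENNReal.ofReal_mul (norm_nonneg _)]
  simp [norm_sub_rev x y]

lemma pathDist_le_two {E : Type*} [NormedAddCommGroup E] [InnerProductSpace ℝ E]
    (X : Set E) {x z y : E} (h1 : ∀ t ∈ Set.Icc (0:ℝ) 1, x + t • (z - x) ∈ X)
    (h2 : ∀ t ∈ Set.Icc (0:ℝ) 1, z + t • (y - z) ∈ X) :
    pathDist X x y ≤ edist x z + edist z y := by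
  set γ : ℝ → E := fun t => if t ≤ 1/2 then x + (2*t) • (z - x) else z + (2*t - 1) • (y - z)
    with hγ
  have hcont : Continuous γ := by
    apply Continuous.if_le
    · exact (lipschitz_affine x (z-x)).continuous.comp (by continuity)
    · continuity
    · exact continuous_id
    · exact continuous_const
    · intro t ht
      subst ht
      norm_num
  have h0 : γ 0 = x := by norm_num [hγ]
  have h1' : γ 1 = y := by norm_num [hγ]
  have hm : ∀ t ∈ Set.Icc (0:ℝ) 1, γ t ∈ X := by
    intro t ht
    simp only [hγ]
    split_ifs with h
    · exact h1 (2*t) ⟨by linarith [ht.1], by linarith⟩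
    · push_neg at h
      exact h2 (2*t-1) ⟨by linarith, by linarith [ht.2]⟩
  refine (pathDist_le_of_le X hcont.continuousOn h0 h1' hm).trans ?_
  have hsplit := eVariationOn.Icc_add_Icc γ (a := 0) (b := 1/2) (c := 1)
    (by norm_num) (by norm_num) (s := Set.Icc 0 1) (by norm_num)
  have e1 : Set.Icc (0:ℝ) 1 ∩ Set.Icc 0 (1/2) = Set.Icc (0:ℝ) (1/2) := by
    rw [Set.inter_eq_right.2]; exact Set.Icc_subset_Icc le_rfl (by norm_num)
  have e2 : Set.Icc (0:ℝ) 1 ∩ Set.Icc (1/2) 1 = Set.Icc (1/2:ℝ) 1 := by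
    rw [Set.inter_eq_right.2]; exact Set.Icc_subset_Icc (by norm_num) le_rfl
  have e3 : Set.Icc (0:ℝ) 1 ∩ Set.Icc 0 1 = Set.Icc (0:ℝ) 1 := Set.inter_self _
  rw [e1, e2, e3] at hsplit
  rw [← hsplit]
  have p1 : eVariationOn γ (Set.Icc 0 (1/2)) ≤ edist x z := by
    have heq : Set.EqOn γ (fun t : ℝ => x + t • ((2:ℝ) • (z - x))) (Set.Icc 0 (1/2)) := by
      intro t ht
      simp only [hγ, if_pos ht.2, smul_smul]
      ring_nf
    rw [eVariationOn.eq_of_eqOn heq]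
    refine (evar_affine x _ (by norm_num)).trans_eq ?_
    rw [edist_dist, dist_eq_norm, ← enorm_eq_nnnorm, ← ofReal_norm,
      ← ENNReal.ofReal_mul (norm_nonneg _)]
    rw [norm_smul]
    rw [norm_sub_rev x z, Real.norm_ofNat]; congr 1; ring
  have p2 : eVariationOn γ (Set.Icc (1/2) 1) ≤ edist z y := by
    have heq : Set.EqOn γ (fun t : ℝ => (z - (y - z)) + t • ((2:ℝ) • (y - z)))
        (Set.Icc (1/2) 1) := by
      intro t ht
      simp only [hγ, smul_smul]
      split_ifs with h
      · have : t = 1/2 := le_antisymm h ht.1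
        subst this
        norm_num
      · module
    rw [eVariationOn.eq_of_eqOn heq]
    refine (evar_affine _ _ (by norm_num)).trans_eq ?_
    rw [edist_dist, dist_eq_norm, ← enorm_eq_nnnorm, ← ofReal_norm,
      ← ENNReal.ofReal_mul (norm_nonneg _)]
    rw [norm_smul]
    rw [norm_sub_rev z y, Real.norm_ofNat]; congr 1; ring
  exact add_le_add p1 p2

lemma dist_two (p q : EuclideanSpace ℝ (Fin 2)) :
    dist p q = Real.sqrt ((p 0 - q 0)^2 + (p 1 - q 1)^2) := by
  rw [EuclideanSpace.dist_eq]
  simp [Fin.sum_univ_two, Real.dist_eq, sq_abs]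

lemma norm_two (p : EuclideanSpace ℝ (Fin 2)) :
    ‖p‖ = Real.sqrt ((p 0)^2 + (p 1)^2) := by
  rw [EuclideanSpace.norm_eq]
  simp [Fin.sum_univ_two, sq_abs]

lemma crossing {X : Set (EuclideanSpace ℝ (Fin 2))} (hX : ∀ p ∈ X, p 0 ≤ 0 ∨ p 1 ≤ 0)
    {x y : EuclideanSpace ℝ (Fin 2)} (hx0 : x 0 ≤ 0) (hx1 : 0 ≤ x 1) (hy : y 0 = 1) :
    ENNReal.ofReal (1 + ‖x‖) ≤ pathDist X x y := by
  refine le_iInf fun γ => le_iInf fun hcont => le_iInf fun h0 => le_iInf fun h1 =>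
    le_iInf fun hmem => ?_
  have hcont0 : ContinuousOn (fun t => γ t 0) (Set.Icc 0 1) :=
    (EuclideanSpace.proj (0 : Fin 2)).continuous.comp_continuousOn hcont
  have hcont1 : ContinuousOn (fun t => γ t 1) (Set.Icc 0 1) :=
    (EuclideanSpace.proj (1 : Fin 2)).continuous.comp_continuousOn hcont
  set A : Set ℝ := Set.Icc 0 1 ∩ (fun t => γ t 0) ⁻¹' Set.Iic 0 with hA
  have h0A : (0:ℝ) ∈ A := ⟨⟨le_rfl, zero_le_one⟩, by simp [h0, hx0]⟩
  have hAbdd : BddAbove A := ⟨1, fun t ht => ht.1.2⟩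
  have hAclosed : IsClosed A :=
    hcont0.preimage_isClosed_of_isClosed isClosed_Icc isClosed_Iic
  set s : ℝ := sSup A with hs
  have hsA : s ∈ A := hAclosed.csSup_mem ⟨0, h0A⟩ hAbdd
  have hs0 : 0 ≤ s := hsA.1.1
  have hs1 : s ≤ 1 := hsA.1.2
  have h1notA : (1:ℝ) ∉ A := by
    intro h
    have : γ 1 0 ≤ 0 := h.2
    rw [h1, hy] at this
    linarith
  have hslt : s < 1 := lt_of_le_of_ne hs1 (fun h => h1notA (h ▸ hsA))
  have hafter : ∀ t ∈ Set.Ioc s 1, 0 < γ t 0 := by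
    intro t ht
    by_contra h
    push_neg at h
    have : t ∈ A := ⟨⟨hs0.trans ht.1.le, ht.2⟩, h⟩
    exact absurd (le_csSup hAbdd this) (not_le.2 ht.1)
  -- limit arguments
  haveI : (𝓝[Set.Ioc s 1] s).NeBot := left_nhdsWithin_Ioc_neBot hslt
  have hsub : Set.Ioc s 1 ⊆ Set.Icc 0 1 := fun t ht => ⟨hs0.trans ht.1.le, ht.2⟩
  have htend0 : Filter.Tendsto (fun t => γ t 0) (nhdsWithin s (Set.Ioc s 1)) (nhds (γ s 0)) :=
    ((hcont0 s ⟨hs0, hs1⟩).mono hsub).tendsto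
  have hq0' : 0 ≤ γ s 0 := by
    refine ge_of_tendsto htend0 ?_
    filter_upwards [self_mem_nhdsWithin] with t ht using (hafter t ht).le
  have hq0 : γ s 0 = 0 := le_antisymm hsA.2 hq0'
  have htend1 : Filter.Tendsto (fun t => γ t 1) (nhdsWithin s (Set.Ioc s 1)) (nhds (γ s 1)) :=
    ((hcont1 s ⟨hs0, hs1⟩).mono hsub).tendsto
  have hq1 : γ s 1 ≤ 0 := by
    refine le_of_tendsto htend1 ?_
    filter_upwards [self_mem_nhdsWithin] with t ht
    rcases hX _ (hmem t (hsub ht)) with h | h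
    · exact absurd (hafter t ht) (not_lt.2 h)
    · exact h
  -- split the variation
  have hsplit := eVariationOn.Icc_add_Icc γ (a := 0) (b := s) (c := 1) hs0 hs1
    (s := Set.Icc 0 1) ⟨hs0, hs1⟩
  have e1 : Set.Icc (0:ℝ) 1 ∩ Set.Icc 0 s = Set.Icc (0:ℝ) s :=
    Set.inter_eq_right.2 (Set.Icc_subset_Icc le_rfl hs1)
  have e2 : Set.Icc (0:ℝ) 1 ∩ Set.Icc s 1 = Set.Icc s 1 :=
    Set.inter_eq_right.2 (Set.Icc_subset_Icc hs0 le_rfl)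
  have e3 : Set.Icc (0:ℝ) 1 ∩ Set.Icc 0 1 = Set.Icc (0:ℝ) 1 := Set.inter_self _
  rw [e1, e2, e3] at hsplit
  rw [← hsplit]
  have p1 : ENNReal.ofReal ‖x‖ ≤ eVariationOn γ (Set.Icc 0 s) := by
    refine le_trans ?_ (eVariationOn.edist_le γ (Set.left_mem_Icc.2 hs0)
      (Set.right_mem_Icc.2 hs0))
    rw [h0, edist_dist, dist_two, norm_two]
    apply ENNReal.ofReal_le_ofReal
    apply Real.sqrt_le_sqrt
    have : (x 1)^2 ≤ (x 1 - γ s 1)^2 := by nlinarith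
    nlinarith [sq_nonneg (x 0 - γ s 0), hq0]
  have p2 : ENNReal.ofReal 1 ≤ eVariationOn γ (Set.Icc s 1) := by
    refine le_trans ?_ (eVariationOn.edist_le γ (Set.left_mem_Icc.2 hs1)
      (Set.right_mem_Icc.2 hs1))
    rw [h1, edist_dist, dist_two]
    apply ENNReal.ofReal_le_ofReal
    rw [hq0, hy]
    have h2 : (1:ℝ) = Real.sqrt 1 := by simp
    rw [h2]
    apply Real.sqrt_le_sqrt
    nlinarith [sq_nonneg (γ s 1 - y 1)]
  calc ENNReal.ofReal (1 + ‖x‖) = ENNReal.ofReal ‖x‖ + ENNReal.ofReal 1 := by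
        rw [← ENNReal.ofReal_add (norm_nonneg _) zero_le_one]; ring_nf
    _ ≤ eVariationOn γ (Set.Icc 0 s) + eVariationOn γ (Set.Icc s 1) := add_le_add p1 p2

lemma ofReal_add3 {u v w : ℝ} (hu : 0 ≤ u) (hv : 0 ≤ v) (hw : 0 ≤ w) :
    ENNReal.ofReal (u + v + w) = ENNReal.ofReal u + ENNReal.ofReal v + ENNReal.ofReal w := by
  rw [ENNReal.ofReal_add (by positivity) hw, ENNReal.ofReal_add hu hv]

lemma ofReal_sq_le {u : ℝ} {p : ℝ≥0∞} (hu : 0 ≤ u) (h : ENNReal.ofReal u ≤ p) :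
    ENNReal.ofReal (u^2) ≤ p^2 := by
  rw [ENNReal.ofReal_pow hu]; exact pow_le_pow_left₀ zero_le h 2

lemma sq_le_ofReal {u : ℝ} {p : ℝ≥0∞} (hu : 0 ≤ u) (h : p ≤ ENNReal.ofReal u) :
    p^2 ≤ ENNReal.ofReal (u^2) := by
  rw [ENNReal.ofReal_pow hu]; exact pow_le_pow_left₀ zero_le h 2

set_option maxHeartbeats 2000000 in
theorem stmt_11 :
    let X : Set (EuclideanSpace ℝ (Fin 2)) :=
      {p | |p 0| ≤ 1 ∧ |p 1| ≤ 1 ∧ (p 0 ≤ 0 ∨ p 1 ≤ 0)}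
    let e₁ : EuclideanSpace ℝ (Fin 2) := WithLp.toLp 2 (fun i => if i = 0 then 1 else 0)
    let e₂ : EuclideanSpace ℝ (Fin 2) := WithLp.toLp 2 (fun i => if i = 0 then 0 else 1)
    let α : ℝ := (2 - Real.sqrt 2) / 6
    let c : EuclideanSpace ℝ (Fin 2) := WithLp.toLp 2 (fun i => if i = 0 then -α else α)
    let m : EuclideanSpace ℝ (Fin 2) → ℝ≥0∞ := fun x =>
      pathDist X x e₁ ^ 2 + pathDist X x e₂ ^ 2 + pathDist X x (-e₁) ^ 2
    ∀ x ∈ X, x ≠ c → m c < m x := by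
  intro X e₁ e₂ α c m x hx hxc
  obtain ⟨hx0, hx1, hxor⟩ := hx
  set s2 := Real.sqrt 2 with hs2def
  have hs2 : s2 ^ 2 = 2 := Real.sq_sqrt (by norm_num)
  have hs2nn : 0 ≤ s2 := Real.sqrt_nonneg 2
  have hs2lt : s2 < 2 := by nlinarith
  have hs2gt : 1 < s2 := by nlinarith
  have hα : α = (2 - s2) / 6 := rfl
  have hα0 : 0 < α := by rw [hα]; linarith
  have hα1 : α < 1 := by rw [hα]; linarith
  -- coordinates
  have hc0 : c 0 = -α := rfl
  have hc1 : c 1 = α := rfl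
  have he₁0 : e₁ 0 = 1 := rfl
  have he₁1 : e₁ 1 = 0 := rfl
  have he₂0 : e₂ 0 = 0 := rfl
  have he₂1 : e₂ 1 = 1 := rfl
  have hXmem : ∀ p : EuclideanSpace ℝ (Fin 2),
      |p 0| ≤ 1 → |p 1| ≤ 1 → (p 0 ≤ 0 ∨ p 1 ≤ 0) → p ∈ X := fun p h1 h2 h3 => ⟨h1, h2, h3⟩
  have hseg : ∀ (p q : EuclideanSpace ℝ (Fin 2)) (t : ℝ) (i : Fin 2),
      (p + t • (q - p)) i = p i + t * (q i - p i) := fun _ _ _ _ => rfl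
  -- norm of c
  have hnc : ‖c‖ = s2 * α := by
    rw [norm_two, hc0, hc1]
    have h : (-α) ^ 2 + α ^ 2 = (s2 * α) ^ 2 := by rw [mul_pow, hs2]; ring
    rw [h, Real.sqrt_sq (by positivity)]
  have hzero : ∀ i : Fin 2, (0 : EuclideanSpace ℝ (Fin 2)) i = 0 := fun _ => rfl
  -- upper bound for pathDist X c e₁ via two segments through 0
  have u1 : pathDist X c e₁ ≤ ENNReal.ofReal (s2 * α + 1) := by
    have hseg1 : ∀ t ∈ Set.Icc (0:ℝ) 1, c + t • ((0 : EuclideanSpace ℝ (Fin 2)) - c) ∈ X := by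
      intro t ht
      refine hXmem _ ?_ ?_ ?_ <;> simp only [hseg, hzero, hc0, hc1]
      · rw [abs_le]; constructor <;> nlinarith [ht.1, ht.2]
      · rw [abs_le]; constructor <;> nlinarith [ht.1, ht.2]
      · left; nlinarith [ht.1, ht.2]
    have hseg2 : ∀ t ∈ Set.Icc (0:ℝ) 1,
        (0 : EuclideanSpace ℝ (Fin 2)) + t • (e₁ - 0) ∈ X := by
      intro t ht
      refine hXmem _ ?_ ?_ ?_ <;> simp only [hseg, hzero, he₁0, he₁1]
      · rw [abs_le]; constructor <;> nlinarith [ht.1, ht.2]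
      · rw [abs_le]; constructor <;> nlinarith [ht.1, ht.2]
      · right; nlinarith [ht.1, ht.2]
    refine (pathDist_le_two X hseg1 hseg2).trans ?_
    rw [edist_dist, edist_dist, dist_zero_right, dist_zero_left, hnc]
    have hne : ‖e₁‖ = 1 := by
      rw [norm_two, he₁0, he₁1]; norm_num
    rw [hne, ← ENNReal.ofReal_add (by positivity) zero_le_one]
  -- upper bound for pathDist X c e₂
  have u2 : pathDist X c e₂ ≤ ENNReal.ofReal (Real.sqrt (α^2 + (1-α)^2)) := by
    have hsg : ∀ t ∈ Set.Icc (0:ℝ) 1, c + t • (e₂ - c) ∈ X := by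
      intro t ht
      refine hXmem _ ?_ ?_ ?_ <;> simp only [hseg, hc0, hc1, he₂0, he₂1]
      · rw [abs_le]; constructor <;> nlinarith [ht.1, ht.2]
      · rw [abs_le]; constructor <;> nlinarith [ht.1, ht.2]
      · left; nlinarith [ht.1, ht.2]
    refine (pathDist_le_segment X hsg).trans ?_
    rw [edist_dist, dist_two, hc0, hc1, he₂0, he₂1]
    apply ENNReal.ofReal_le_ofReal
    apply Real.sqrt_le_sqrt
    nlinarith
  -- upper bound for pathDist X c (-e₁)
  have hne₁0 : (-e₁) 0 = -1 := rfl
  have hne₁1 : (-e₁) 1 = 0 := by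
    rw [show (-e₁) 1 = -(e₁ 1) from rfl, he₁1, neg_zero]
  have u3 : pathDist X c (-e₁) ≤ ENNReal.ofReal (Real.sqrt ((1-α)^2 + α^2)) := by
    have hsg : ∀ t ∈ Set.Icc (0:ℝ) 1, c + t • (-e₁ - c) ∈ X := by
      intro t ht
      refine hXmem _ ?_ ?_ ?_ <;> simp only [hseg, hc0, hc1, hne₁0, hne₁1]
      · rw [abs_le]; constructor <;> nlinarith [ht.1, ht.2]
      · rw [abs_le]; constructor <;> nlinarith [ht.1, ht.2]
      · left; nlinarith [ht.1, ht.2]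
    refine (pathDist_le_segment X hsg).trans ?_
    rw [edist_dist, dist_two, hc0, hc1, hne₁0, hne₁1]
    apply ENNReal.ofReal_le_ofReal
    apply Real.sqrt_le_sqrt
    nlinarith
  -- assemble the upper bound for m c
  have hS : (s2*α+1)^2 + (α^2+(1-α)^2) + ((1-α)^2+α^2) = 3 - 6*α^2 := by
    rw [hα]; linear_combination (s2^2/36 - s2/9 + 1/9) * hs2
  have hU : m c ≤ ENNReal.ofReal (3 - 6*α^2) := by
    have q1 : pathDist X c e₁ ^ 2 ≤ ENNReal.ofReal ((s2*α+1)^2) :=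
      sq_le_ofReal (by positivity) u1
    have q2 : pathDist X c e₂ ^ 2 ≤ ENNReal.ofReal (Real.sqrt (α^2+(1-α)^2) ^ 2) :=
      sq_le_ofReal (Real.sqrt_nonneg _) u2
    have q3 : pathDist X c (-e₁) ^ 2 ≤ ENNReal.ofReal (Real.sqrt ((1-α)^2+α^2) ^ 2) :=
      sq_le_ofReal (Real.sqrt_nonneg _) u3
    rw [Real.sq_sqrt (by positivity : (0:ℝ) ≤ α^2+(1-α)^2)] at q2
    rw [Real.sq_sqrt (by positivity : (0:ℝ) ≤ (1-α)^2+α^2)] at q3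
    calc m c ≤ ENNReal.ofReal ((s2*α+1)^2) + ENNReal.ofReal (α^2+(1-α)^2)
          + ENNReal.ofReal ((1-α)^2+α^2) := add_le_add (add_le_add q1 q2) q3
      _ = ENNReal.ofReal ((s2*α+1)^2 + (α^2+(1-α)^2) + ((1-α)^2+α^2)) :=
          (ofReal_add3 (by positivity) (by positivity) (by positivity)).symm
      _ = ENNReal.ofReal (3 - 6*α^2) := by rw [hS]
  -- generic Euclidean lower bounds
  have low : ∀ y : EuclideanSpace ℝ (Fin 2),
      ENNReal.ofReal (((x 0 - y 0)^2 + (x 1 - y 1)^2)) ≤ pathDist X x y ^ 2 := by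
    intro y
    have h := edist_le_pathDist X x y
    rw [edist_dist, dist_two] at h
    have h2 := ofReal_sq_le (Real.sqrt_nonneg _) h
    rwa [Real.sq_sqrt (by positivity : (0:ℝ) ≤ (x 0 - y 0)^2 + (x 1 - y 1)^2)] at h2
  have hαS : (0:ℝ) < 3 - 6*α^2 := by nlinarith [hα0, hα, hs2gt, hs2lt]
  rcases le_or_gt (x 1) 0 with hb | hb
  · -- case x 1 ≤ 0 : Euclidean bounds suffice, m x ≥ 3
    have l1 := low e₁
    have l2 := low e₂
    have l3 := low (-e₁)
    rw [he₁0, he₁1] at l1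
    rw [he₂0, he₂1] at l2
    rw [hne₁0, hne₁1] at l3
    have hmx : ENNReal.ofReal 3 ≤ m x := by
      have : ENNReal.ofReal (((x 0 - 1)^2 + (x 1 - 0)^2) + ((x 0 - 0)^2 + (x 1 - 1)^2)
          + ((x 0 - -1)^2 + (x 1 - 0)^2)) ≤ m x := by
        rw [ofReal_add3 (by positivity) (by positivity) (by positivity)]
        exact add_le_add (add_le_add l1 l2) l3
      refine le_trans ?_ this
      apply ENNReal.ofReal_le_ofReal
      nlinarith [hb, sq_nonneg (x 0), sq_nonneg (x 1)]
    refine lt_of_le_of_lt hU (lt_of_lt_of_le ?_ hmx)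
    rw [ENNReal.ofReal_lt_ofReal_iff (by norm_num)]
    nlinarith
  · -- case 0 < x 1 : use the crossing lower bound for pathDist x e₁
    have ha : x 0 ≤ 0 := hxor.resolve_right (not_le.2 hb)
    have l1 : ENNReal.ofReal (1 + ‖x‖) ≤ pathDist X x e₁ :=
      crossing (fun p hp => hp.2.2) ha hb.le he₁0
    have l1sq : ENNReal.ofReal ((1 + ‖x‖)^2) ≤ pathDist X x e₁ ^ 2 :=
      ofReal_sq_le (by positivity) l1
    have l2 := low e₂
    have l3 := low (-e₁)
    rw [he₂0, he₂1] at l2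
    rw [hne₁0, hne₁1] at l3
    set r := ‖x‖ with hrdef
    have hr0 : 0 ≤ r := norm_nonneg _
    have hr2 : r^2 = (x 0)^2 + (x 1)^2 := by
      rw [hrdef, norm_two, Real.sq_sqrt (by positivity)]
    have h2r : s2 * (x 1 - x 0) ≤ 2 * r := by
      nlinarith [sq_nonneg (x 0 + x 1), sq_nonneg (2*r - s2*(x 1 - x 0)), hr2, hs2,
        mul_nonneg hs2nn (by linarith : (0:ℝ) ≤ x 1 - x 0)]
    have hco : 0 < (x 0 + α)^2 + (x 1 - α)^2 := by
      rcases eq_or_ne (x 0) (-α) with h0 | h0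
      · rcases eq_or_ne (x 1) α with h1 | h1
        · exact absurd (PiLp.ext fun i => by
            fin_cases i
            · exact h0.trans hc0.symm
            · exact h1.trans hc1.symm) hxc
        · have h2 : 0 < (x 1 - α)^2 :=
            (sq_nonneg _).lt_of_ne' (pow_ne_zero 2 (sub_ne_zero.2 h1))
          linarith [sq_nonneg (x 0 + α)]
      · have h2 : 0 < (x 0 + α)^2 :=
          (sq_nonneg _).lt_of_ne' (pow_ne_zero 2
            (fun h => h0 (eq_neg_of_add_eq_zero_left h)))
        linarith [sq_nonneg (x 1 - α)]
    have hmx : ENNReal.ofReal ((1 + r)^2 + ((x 0 - 0)^2 + (x 1 - 1)^2)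
        + ((x 0 - -1)^2 + (x 1 - 0)^2)) ≤ m x := by
      rw [ofReal_add3 (by positivity) (by positivity) (by positivity)]
      exact add_le_add (add_le_add l1sq l2) l3
    refine lt_of_le_of_lt hU (lt_of_lt_of_le ?_ hmx)
    rw [ENNReal.ofReal_lt_ofReal_iff (by positivity)]
    rw [hα] at hco ⊢
    nlinarith [h2r, hco, hr2]
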